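/- Let H be symmetric PSD, γ λ_max(H) ≤ 1, and for a vector β_0 define ω_i = v_i^T β_0 where v_i are orthonormal eigenvectors of H with eigenvalues λ_i. Then (1/(γN²)) Σ_{k=0}^{N−1} ⟨(I−γH)^k − (I−γH)^{N+k}, β_0 β_0^T⟩ ≤ (1/(γ²N²)) Σ_{i ≤ k*} ω_i²/λ_i + Σ_{i > k*} λ_i ω_i², where k* = max{k : λ_k ≥ 1/(γN)} and eigenvalues are sorted decreasingly. -/

import Mathlib

open Matrix


lemma vmv_T {d : ℕ} (a b : Fin d → ℝ) : (vecMulVec a b)ᵀ = vecMulVec b a := by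
  ext i j; simp [vecMulVec_apply, mul_comm]

lemma vmv_mul {d : ℕ} (a b c e : Fin d → ℝ) :
    vecMulVec a b * vecMulVec c e = (b ⬝ᵥ c) • vecMulVec a e := by
  ext i j; simp [vecMulVec_apply, mul_apply, dotProduct, Finset.sum_mul, Finset.mul_sum]
  apply Finset.sum_congr rfl; intros; ring

lemma vmv_trace {d : ℕ} (a b : Fin d → ℝ) : trace (vecMulVec a b) = a ⬝ᵥ b := by
  simp [trace, vecMulVec_apply, dotProduct, Matrix.diag]

lemma vmv_complete {d : ℕ} (v : Fin d → Fin d → ℝ)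
    (horth : ∀ i j, v i ⬝ᵥ v j = if i = j then (1 : ℝ) else 0) :
    ∑ i, vecMulVec (v i) (v i) = 1 := by
  have h1 : (Matrix.of v) * (Matrix.of v)ᵀ = 1 := by
    ext i j
    simpa [mul_apply, dotProduct, Matrix.one_apply] using horth i j
  have h2 : (Matrix.of v)ᵀ * (Matrix.of v) = 1 := mul_eq_one_comm.mp h1
  ext a b
  have := congrFun (congrFun h2 a) b
  rw [Matrix.sum_apply]
  simpa [mul_apply, vecMulVec_apply] using this

lemma pow_expand {d : ℕ} (v : Fin d → Fin d → ℝ) (c : Fin d → ℝ)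
    (horth : ∀ i j, v i ⬝ᵥ v j = if i = j then (1 : ℝ) else 0) (k : ℕ) :
    (∑ i, c i • vecMulVec (v i) (v i)) ^ k
      = ∑ i, (c i ^ k) • vecMulVec (v i) (v i) := by
  induction k with
  | zero => simp [vmv_complete v horth]
  | succ k ih =>
    rw [pow_succ, ih, Finset.sum_mul]
    apply Finset.sum_congr rfl
    intro i _
    rw [Finset.mul_sum]
    rw [Finset.sum_eq_single i]
    · rw [smul_mul_smul_comm, vmv_mul, horth, if_pos rfl, one_smul, pow_succ]
    · intro j _ hj
      rw [smul_mul_smul_comm, vmv_mul, horth, if_neg (Ne.symm hj), zero_smul, smul_zero]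
    · simp

/-- with `H = Σ_i λ_i v_i v_iᵀ` (orthonormal eigenvectors, positive
eigenvalues sorted decreasingly), `γλ_1 ≤ 1`, `ω_i = v_iᵀ β_0` and
`k* = max{k : λ_k ≥ 1/(γN)}`,
`(1/(γN²)) Σ_{k=0}^{N-1} ⟨(I-γH)^k - (I-γH)^{N+k}, β_0 β_0ᵀ⟩
  ≤ (1/(γ²N²)) Σ_{i ≤ k*} ω_i²/λ_i + Σ_{i > k*} λ_i ω_i²`. -/
theorem bias_bound_effective_dim {d : ℕ} (H : Matrix (Fin d) (Fin d) ℝ) (γ : ℝ) (N : ℕ)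
    (kstar : ℕ) (v : Fin d → Fin d → ℝ) (lam : Fin d → ℝ) (β0 : Fin d → ℝ)
    (hH : H = ∑ i, lam i • Matrix.vecMulVec (v i) (v i))
    (horth : ∀ i j, v i ⬝ᵥ v j = if i = j then (1 : ℝ) else 0)
    (hpos : ∀ i, 0 < lam i)
    (hsort : ∀ i j : Fin d, i ≤ j → lam j ≤ lam i)
    (hγ : 0 < γ) (hγ1 : ∀ i, γ * lam i ≤ 1) (hN : 0 < N)
    (hk : ∀ i : Fin d, 1 / (γ * (N : ℝ)) ≤ lam i ↔ (i : ℕ) < kstar) :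
    (1 / (γ * (N : ℝ) ^ 2)) * ∑ k ∈ Finset.range N,
        Matrix.trace ((((1 - γ • H) ^ k - (1 - γ • H) ^ (N + k)))ᵀ
          * Matrix.vecMulVec β0 β0)
      ≤ (1 / (γ ^ 2 * (N : ℝ) ^ 2))
          * ∑ i ∈ Finset.univ.filter (fun i : Fin d => (i : ℕ) < kstar),
              (v i ⬝ᵥ β0) ^ 2 / lam i
        + ∑ i ∈ Finset.univ.filter (fun i : Fin d => kstar ≤ (i : ℕ)),
            lam i * (v i ⬝ᵥ β0) ^ 2 := by
  set r : Fin d → ℝ := fun i => 1 - γ * lam i with hr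
  set ω : Fin d → ℝ := fun i => v i ⬝ᵥ β0 with hω
  have hNR : (0:ℝ) < N := by exact_mod_cast hN
  -- basic facts about r
  have hr0 : ∀ i, 0 ≤ r i := fun i => by simp [hr]; linarith [hγ1 i]
  have hr1 : ∀ i, r i ≤ 1 := fun i => by
    simp only [hr]; nlinarith [hpos i, hγ]
  -- expansion of 1 - γ•H
  have hM : (1 : Matrix (Fin d) (Fin d) ℝ) - γ • H = ∑ i, r i • vecMulVec (v i) (v i) := by
    rw [hH, Finset.smul_sum]
    rw [show (1 : Matrix (Fin d) (Fin d) ℝ) = ∑ i, vecMulVec (v i) (v i) from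
      (vmv_complete v horth).symm]
    rw [← Finset.sum_sub_distrib]
    apply Finset.sum_congr rfl
    intro i _
    rw [smul_smul, hr, sub_smul, one_smul]
  -- trace identity per k
  have htr : ∀ k : ℕ, Matrix.trace ((((1 - γ • H) ^ k - (1 - γ • H) ^ (N + k)))ᵀ
      * Matrix.vecMulVec β0 β0) = ∑ i, (r i ^ k - r i ^ (N + k)) * ω i ^ 2 := by
    intro k
    rw [hM, pow_expand v r horth, pow_expand v r horth, ← Finset.sum_sub_distrib]
    have : (∑ i, (r i ^ k • vecMulVec (v i) (v i) - r i ^ (N+k) • vecMulVec (v i) (v i)))ᵀ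
        * vecMulVec β0 β0
        = ∑ i, (r i ^ k - r i ^ (N+k)) • ((v i ⬝ᵥ β0) • vecMulVec (v i) β0) := by
      rw [Matrix.transpose_sum, Finset.sum_mul]
      apply Finset.sum_congr rfl
      intro i _
      rw [← sub_smul, Matrix.transpose_smul, vmv_T, smul_mul_assoc, vmv_mul]
    rw [this, Matrix.trace_sum]
    apply Finset.sum_congr rfl
    intro i _
    rw [Matrix.trace_smul, Matrix.trace_smul, vmv_trace]
    simp only [smul_eq_mul, hω]
    ring
  -- swapped sum
  have hsum : ∑ k ∈ Finset.range N, Matrix.trace ((((1 - γ • H) ^ k - (1 - γ • H) ^ (N + k)))ᵀ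
      * Matrix.vecMulVec β0 β0)
      = ∑ i, ω i ^ 2 * ∑ k ∈ Finset.range N, (r i ^ k - r i ^ (N + k)) := by
    rw [Finset.sum_congr rfl (fun k _ => htr k), Finset.sum_comm]
    apply Finset.sum_congr rfl
    intro i _
    rw [Finset.mul_sum]
    apply Finset.sum_congr rfl
    intro k _
    ring
  rw [hsum, Finset.mul_sum]
  -- per-index geometric facts
  have hgeom : ∀ i : Fin d, γ * lam i * (∑ k ∈ Finset.range N, r i ^ k) = 1 - r i ^ N := by
    intro i
    have := geom_sum_mul (r i) N
    have h1 : (1 - r i) * (∑ k ∈ Finset.range N, r i ^ k) = 1 - r i ^ N := by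
      have := mul_comm (∑ k ∈ Finset.range N, r i ^ k) (r i - 1)
      nlinarith [geom_sum_mul (r i) N]
    simpa [hr] using h1
  have hGnn : ∀ i : Fin d, 0 ≤ ∑ k ∈ Finset.range N, r i ^ k :=
    fun i => Finset.sum_nonneg fun k _ => pow_nonneg (hr0 i) k
  have hGle : ∀ i : Fin d, (∑ k ∈ Finset.range N, r i ^ k) ≤ N := by
    intro i
    calc (∑ k ∈ Finset.range N, r i ^ k) ≤ ∑ k ∈ Finset.range N, 1 :=
          Finset.sum_le_sum fun k _ => pow_le_one₀ (hr0 i) (hr1 i)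
      _ = N := by simp
  have hrNle : ∀ i : Fin d, r i ^ N ≤ 1 := fun i => pow_le_one₀ (hr0 i) (hr1 i)
  have hrNnn : ∀ i : Fin d, 0 ≤ r i ^ N := fun i => pow_nonneg (hr0 i) N
  have hS : ∀ i : Fin d, ∑ k ∈ Finset.range N, (r i ^ k - r i ^ (N + k))
      = (1 - r i ^ N) * ∑ k ∈ Finset.range N, r i ^ k := by
    intro i
    rw [Finset.sum_sub_distrib, sub_mul, one_mul, Finset.mul_sum]
    congr 1
    apply Finset.sum_congr rfl
    intro k _
    rw [pow_add]
  -- split the sum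
  rw [← Finset.sum_filter_add_sum_filter_not Finset.univ (fun i : Fin d => (i:ℕ) < kstar)]
  have hfilter2 : (Finset.univ.filter fun i : Fin d => ¬ (i:ℕ) < kstar)
      = Finset.univ.filter fun i : Fin d => kstar ≤ (i:ℕ) := by
    apply Finset.filter_congr; intro i _; simp [not_lt]
  rw [hfilter2]
  apply add_le_add
  · rw [Finset.mul_sum]
    apply Finset.sum_le_sum
    intro i hi
    rw [Finset.mem_filter] at hi
    have hlam := hpos i
    have hgl : 0 < γ * lam i := by positivity
    -- S ≤ 1/(gamma lam)
    have hG : (∑ k ∈ Finset.range N, r i ^ k) = (1 - r i ^ N) / (γ * lam i) := by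
      field_simp
      linarith [hgeom i]
    have hSle : ∑ k ∈ Finset.range N, (r i ^ k - r i ^ (N + k)) ≤ 1 / (γ * lam i) := by
      rw [hS i, hG, ← mul_div_assoc]
      rw [div_le_div_iff₀ (by positivity) (by positivity)]
      have hsq : (1 - r i ^ N) * (1 - r i ^ N) ≤ 1 := by nlinarith [hrNle i, hrNnn i]
      nlinarith [hsq, hgl]
    have hSnn : 0 ≤ ∑ k ∈ Finset.range N, (r i ^ k - r i ^ (N + k)) := by
      rw [hS i]
      exact mul_nonneg (by linarith [hrNle i]) (hGnn i)
    have h1 : (0:ℝ) < 1 / (γ * (N:ℝ)^2) := by positivity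
    calc 1 / (γ * (N:ℝ)^2) * (ω i ^ 2 * ∑ k ∈ Finset.range N, (r i ^ k - r i ^ (N + k)))
        ≤ 1 / (γ * (N:ℝ)^2) * (ω i ^ 2 * (1 / (γ * lam i))) := by
          apply mul_le_mul_of_nonneg_left _ (le_of_lt h1)
          exact mul_le_mul_of_nonneg_left hSle (sq_nonneg _)
      _ = 1 / (γ^2 * (N:ℝ)^2) * (ω i ^ 2 / lam i) := by
          field_simp
  · apply Finset.sum_le_sum
    intro i hi
    rw [Finset.mem_filter] at hi
    have hlam := hpos i
    -- Bernoulli : 1 - r^N ≤ N gamma lam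
    have hbern : 1 - r i ^ N ≤ (N:ℝ) * (γ * lam i) := by
      have h2 : (-2:ℝ) ≤ -(γ * lam i) := by linarith [hγ1 i]
      have := one_add_mul_le_pow h2 N
      have he : (1 + -(γ * lam i)) = r i := by simp [hr]; ring
      rw [he] at this
      linarith
    have hSle : ∑ k ∈ Finset.range N, (r i ^ k - r i ^ (N + k))
        ≤ ((N:ℝ) * (γ * lam i)) * N := by
      rw [hS i]
      apply mul_le_mul hbern (hGle i) (hGnn i)
      positivity
    calc 1 / (γ * (N:ℝ)^2) * (ω i ^ 2 * ∑ k ∈ Finset.range N, (r i ^ k - r i ^ (N + k)))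
        ≤ 1 / (γ * (N:ℝ)^2) * (ω i ^ 2 * (((N:ℝ) * (γ * lam i)) * N)) := by
          apply mul_le_mul_of_nonneg_left _ (by positivity)
          exact mul_le_mul_of_nonneg_left hSle (sq_nonneg _)
      _ = lam i * ω i ^ 2 := by field_simp
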